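/- For integers a, b, k with k ≥ b > a ≥ 1, m ≥ 2 and 0 ≤ h ≤ m−2: Σ_{λ ∈ BD'_{a,b,k}(m,h,a)} u^{ℓ_a(λ)} v^{ℓ_b(λ)} q^{|λ|} = (u q^a + v q^b) u^{h+1} v^{m−h−2} q^{k·C(m,2) + k·C(h+1,2) + (m−1)b + (k−b+a)(h+1)} [m−2 choose h]_k, and Σ_{λ ∈ BD'_{a,b,k}(m,h,b)} u^{ℓ_a(λ)} v^{ℓ_b(λ)} q^{|λ|} = (u q^a + v q^b) u^{h} v^{m−h−1} q^{k·C(m,2) + k·C(h+1,2) + (m−1)b + (k−b+a)h} [m−2 choose h]_k. -/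

import Mathlib

/-- The finite q-Pochhammer symbol `(t;q)_n = ∏_{i=0}^{n-1} (1 - t qⁱ)`. -/
noncomputable def qPoch (t q : ℂ) (n : ℕ) : ℂ := ∏ i ∈ Finset.range n, (1 - t * q ^ i)

/-- The infinite q-Pochhammer symbol `(t;q)_∞ = ∏_{i≥0} (1 - t qⁱ)`. -/
noncomputable def qPochInf (t q : ℂ) : ℂ := ∏' i : ℕ, (1 - t * q ^ i)

/-- The Gaussian binomial coefficient `[A choose B]` in base `q`:
`(q;q)_A / ((q;q)_B (q;q)_{A-B})` for `A ≥ B ≥ 0`, and `0` otherwise. -/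
noncomputable def gbinom (q : ℂ) (A B : ℕ) : ℂ :=
  if B ≤ A then qPoch q q A / (qPoch q q B * qPoch q q (A - B)) else 0

/-- `lcount k c l` is the number of parts of `l` congruent to `c` modulo `k`. -/
def lcount (k c : ℕ) (l : List ℕ) : ℕ := (l.filter (fun x => x % k = c % k)).length

/-- Membership in `BD'_{a,b,k}(m)`: partitions `(λ_1,…,λ_m)` with exactly `m` parts, each
`≡ a` or `b (mod k)`, `λ_m ∈ {a, b}`, and for consecutive parts:
`λ_i - λ_{i+1} ≥ k` with strict inequality if `λ_i ≡ a (mod k)`, and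
`λ_i - λ_{i+1} ≤ 2k` with strict inequality if `λ_{i+1} ≡ b (mod k)`. -/
def memBD' (a b k m : ℕ) (l : List ℕ) : Prop :=
  l.Pairwise (· ≥ ·) ∧ l.length = m ∧
    (∀ x ∈ l, 0 < x ∧ (x % k = a % k ∨ x % k = b % k)) ∧
    (l.getLast? = some a ∨ l.getLast? = some b) ∧
    l.Chain' (fun x y => (y + k ≤ x ∧ (x % k = a % k → y + k < x)) ∧
      (x ≤ y + 2 * k ∧ (y % k = b % k → x < y + 2 * k)))

lemma qPoch_zero (t q : ℂ) : qPoch t q 0 = 1 := by simp [qPoch]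

lemma qPoch_succ (t q : ℂ) (n : ℕ) :
    qPoch t q (n+1) = qPoch t q n * (1 - t * q ^ n) := Finset.prod_range_succ _ _

lemma qPoch_self_ne_zero {x : ℂ} (hx : ‖x‖ < 1) (n : ℕ) : qPoch x x n ≠ 0 := by
  rw [qPoch]
  rw [Finset.prod_ne_zero_iff]
  intro i _
  intro hcon
  have h1 : x * x ^ i = 1 := by
    have := sub_eq_zero.mp hcon
    linear_combination -this
  have h2 : ‖x * x ^ i‖ < 1 := by
    rw [norm_mul, norm_pow]
    calc ‖x‖ * ‖x‖ ^ i ≤ ‖x‖ * 1 :=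
          mul_le_mul_of_nonneg_left (pow_le_one₀ (norm_nonneg x) hx.le) (norm_nonneg x)
      _ = ‖x‖ := by ring
      _ < 1 := hx
  rw [h1] at h2; simp at h2

lemma gbinom_zero_right {x : ℂ} (hx : ‖x‖ < 1) (n : ℕ) : gbinom x n 0 = 1 := by
  rw [gbinom, if_pos (Nat.zero_le n)]
  rw [qPoch_zero]
  simp [div_self (qPoch_self_ne_zero hx n)]

lemma gbinom_eq_zero (x : ℂ) {n B : ℕ} (h : n < B) : gbinom x n B = 0 := by
  rw [gbinom, if_neg (by omega)]

lemma gbinom_pascal {x : ℂ} (hx : ‖x‖ < 1) (n j : ℕ) :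
    gbinom x (n+1) (j+1) = gbinom x n j + x ^ (j+1) * gbinom x n (j+1) := by
  rcases lt_or_ge n j with h | h
  · rw [gbinom_eq_zero x (by omega), gbinom_eq_zero x (by omega), gbinom_eq_zero x (by omega)]
    ring
  rcases eq_or_lt_of_le h with rfl | h
  · rw [show gbinom x j (j+1) = 0 from gbinom_eq_zero x (by omega)]
    rw [gbinom, if_pos le_rfl, gbinom, if_pos le_rfl]
    simp only [Nat.sub_self, qPoch_zero, mul_one]
    rw [div_self (qPoch_self_ne_zero hx (j+1)), div_self (qPoch_self_ne_zero hx j)]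
    ring
  · -- j + 1 ≤ n
    have hj1 : j + 1 ≤ n := h
    rw [gbinom, if_pos (by omega), gbinom, if_pos (by omega), gbinom, if_pos (by omega)]
    obtain ⟨d, hd⟩ : ∃ d, n - (j+1) = d := ⟨_, rfl⟩
    have h1 : n + 1 - (j + 1) = d + 1 := by omega
    have h2 : n - j = d + 1 := by omega
    rw [h1, h2, hd]
    rw [qPoch_succ x x n, qPoch_succ x x j, qPoch_succ x x d]
    have hn : x * x ^ n = x ^ (j+1) * (x * x ^ d) := by
      rw [show x * x ^ n = x ^ (n+1) by ring, show x * x ^ d = x ^ (d+1) by ring, ← pow_add]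
      congr 1; omega
    have e1 := qPoch_self_ne_zero hx n
    have e2 := qPoch_self_ne_zero hx j
    have e3 := qPoch_self_ne_zero hx d
    have e4 : (1 : ℂ) - x * x ^ j ≠ 0 := by
      have := qPoch_self_ne_zero hx (j+1); rw [qPoch_succ] at this
      exact right_ne_zero_of_mul this
    have e5 : (1 : ℂ) - x * x ^ d ≠ 0 := by
      have := qPoch_self_ne_zero hx (d+1); rw [qPoch_succ] at this
      exact right_ne_zero_of_mul this
    field_simp
    rw [hn]
    ring

lemma res_step {k y z : ℕ} (hk : 0 < k) (hmod : y % k = z % k) (hlt : z < y) : z + k ≤ y := by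
  have hdvd : k ∣ y - z := (Nat.modEq_iff_dvd' hlt.le).mp (Nat.ModEq.symm hmod)
  have := Nat.le_of_dvd (by omega) hdvd
  omega

lemma dvd_eq_k {k d : ℕ} (hk : 0 < k) (hd : k ∣ d) (h1 : 0 < d) (h2 : d < 2*k) : d = k := by
  obtain ⟨c, rfl⟩ := hd
  have hc : c < 2 := by
    by_contra hc; push_neg at hc; have := Nat.mul_le_mul_left k hc; omega
  interval_cases c <;> omega

lemma dvd_eq_2k {k d : ℕ} (hk : 0 < k) (hd : k ∣ d) (h1 : k < d) (h2 : d < 3*k) : d = 2*k := by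
  obtain ⟨c, rfl⟩ := hd
  have hc : c < 3 := by
    by_contra hc; push_neg at hc; have := Nat.mul_le_mul_left k hc; omega
  interval_cases c <;> omega

lemma finite_lists (m N : ℕ) : {l : List ℕ | l.length = m ∧ ∀ x ∈ l, x < N}.Finite := by
  induction m with
  | zero =>
    apply Set.Finite.subset (Set.finite_singleton ([] : List ℕ))
    rintro l ⟨hl, -⟩
    simp only [List.length_eq_zero_iff] at hl
    simp [hl]
  | succ m ih =>
    apply Set.Finite.subset (Set.Finite.image (fun p : ℕ × List ℕ => p.1 :: p.2)
      ((Set.finite_Iio N).prod ih))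
    rintro l ⟨hl, hx⟩
    rcases l with _ | ⟨x, t⟩
    · simp at hl
    · exact ⟨(x, t), ⟨hx x (by simp), by simp at hl; exact ⟨hl, fun y hy => hx y (by simp [hy])⟩⟩, rfl⟩

lemma finsum_mem_const_mul {α : Type*} (c : ℂ) (f : α → ℂ) (T : Set α) (hT : T.Finite) :
    ∑ᶠ t ∈ T, c * f t = c * ∑ᶠ t ∈ T, f t := by
  rw [← hT.coe_toFinset, finsum_mem_coe_finset, finsum_mem_coe_finset, Finset.mul_sum]

lemma lcount_cons_self {k c x : ℕ} (t : List ℕ) (h : x % k = c % k) :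
    lcount k c (x :: t) = lcount k c t + 1 := by
  simp [lcount, List.filter_cons, h]

lemma lcount_cons_ne {k c x : ℕ} (t : List ℕ) (h : ¬ (x % k = c % k)) :
    lcount k c (x :: t) = lcount k c t := by
  simp [lcount, List.filter_cons, h]

lemma mod_mul_add (k c r : ℕ) : (k * c + r) % k = r % k := by
  rw [Nat.add_comm, Nat.add_mul_mod_self_left]

section main
variable {a b k : ℕ}

lemma hne_ab (ha : 1 ≤ a) (hab : a < b) (hbk : b ≤ k) : a % k ≠ b % k := by
  rcases eq_or_lt_of_le hbk with rfl | h
  · rw [Nat.mod_self, Nat.mod_eq_of_lt hab]; omega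
  · rw [Nat.mod_eq_of_lt (by omega : a < k), Nat.mod_eq_of_lt h]; omega

lemma hamod (hab : a < b) (hbk : b ≤ k) : a % k = a := Nat.mod_eq_of_lt (by omega)

lemma memBD'_single (ha : 1 ≤ a) (hab : a < b) (hbk : b ≤ k) (z : ℕ) :
    memBD' a b k 1 [z] ↔ z = a ∨ z = b := by
  constructor
  · rintro ⟨-, -, -, hlast, -⟩
    simpa using hlast
  · rintro (rfl | rfl)
    · exact ⟨by simp, by simp, by intro x hx; simp at hx; subst hx; exact ⟨by omega, Or.inl rfl⟩,
        by simp, by simp [List.Chain']⟩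
    · exact ⟨by simp, by simp, by intro x hx; simp at hx; subst hx; exact ⟨by omega, Or.inr rfl⟩,
        by simp, by simp [List.Chain']⟩

lemma memBD'_cons (m x z : ℕ) (t : List ℕ) :
    memBD' a b k (m+1) (x :: z :: t) ↔
      memBD' a b k m (z :: t) ∧ 0 < x ∧ (x % k = a % k ∨ x % k = b % k) ∧
        ((z + k ≤ x ∧ (x % k = a % k → z + k < x)) ∧
          (x ≤ z + 2 * k ∧ (z % k = b % k → x < z + 2 * k))) := by
  constructor
  · rintro ⟨hs, hl, hp, hlast, hc⟩
    simp only [List.Chain', List.isChain_cons_cons] at hc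
    refine ⟨⟨hs.of_cons, by simpa using hl, fun y hy => hp y (by simp [hy]),
      by rwa [List.getLast?_cons_cons] at hlast, hc.2⟩, (hp x (by simp)).1, (hp x (by simp)).2, hc.1⟩
  · rintro ⟨⟨hs, hl, hp, hlast, hc⟩, hx0, hxr, hR⟩
    refine ⟨?_, by simpa using hl, ?_, by rwa [List.getLast?_cons_cons], List.isChain_cons_cons.mpr ⟨hR, hc⟩⟩
    · rw [List.pairwise_cons]
      refine ⟨?_, hs⟩
      intro y hy
      rcases List.mem_cons.mp hy with rfl | hy
      · omega
      · have : z ≥ y := (List.pairwise_cons.mp hs).1 y hy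
        omega
    · intro y hy
      rcases List.mem_cons.mp hy with rfl | hy
      · exact ⟨hx0, hxr⟩
      · exact hp y hy

lemma R_char_a (ha : 1 ≤ a) (hab : a < b) (hbk : b ≤ k) {x z : ℕ}
    (hx : x % k = a % k) (hz : z % k = a % k ∨ z % k = b % k) :
    ((z + k ≤ x ∧ (x % k = a % k → z + k < x)) ∧
      (x ≤ z + 2 * k ∧ (z % k = b % k → x < z + 2 * k)))
    ↔ ((z % k = a % k ∧ x = z + 2 * k) ∨ (z % k = b % k ∧ x + b = z + 2 * k + a)) := by
  have hk : 0 < k := by omega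
  have hne := hne_ab ha hab hbk
  constructor
  · rintro ⟨⟨h1, h1s⟩, h2, h2s⟩
    have h1' : z + k < x := h1s hx
    rcases hz with hza | hzb
    · left
      refine ⟨hza, ?_⟩
      have hdvd : k ∣ x - z := (Nat.modEq_iff_dvd' (by omega)).mp
        (Nat.ModEq.symm (by rw [Nat.ModEq, hx, hza]))
      have := dvd_eq_2k hk hdvd (by omega) (by omega)
      omega
    · right
      refine ⟨hzb, ?_⟩
      have h2' : x < z + 2 * k := h2s hzb
      have hmeq : (z + a) % k = (x + b) % k := by
        rw [Nat.add_mod, Nat.add_mod x b, hx, hzb, Nat.add_comm (b % k) (a % k)]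
      have hdvd : k ∣ (x + b) - (z + a) := (Nat.modEq_iff_dvd' (by omega)).mp hmeq
      have := dvd_eq_2k hk hdvd (by omega) (by omega)
      omega
  · rintro (⟨hza, hxe⟩ | ⟨hzb, hxe⟩)
    · refine ⟨⟨by omega, fun _ => by omega⟩, by omega, fun hzb => absurd (hza ▸ hzb) hne⟩
    · exact ⟨⟨by omega, fun _ => by omega⟩, by omega, fun _ => by omega⟩

lemma R_char_b (ha : 1 ≤ a) (hab : a < b) (hbk : b ≤ k) {x z : ℕ}
    (hx : x % k = b % k) (hz : z % k = a % k ∨ z % k = b % k) :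
    ((z + k ≤ x ∧ (x % k = a % k → z + k < x)) ∧
      (x ≤ z + 2 * k ∧ (z % k = b % k → x < z + 2 * k)))
    ↔ ((z % k = a % k ∧ x + a = z + k + b) ∨ (z % k = b % k ∧ x = z + k)) := by
  have hk : 0 < k := by omega
  have hne := hne_ab ha hab hbk
  constructor
  · rintro ⟨⟨h1, h1s⟩, h2, h2s⟩
    rcases hz with hza | hzb
    · left
      refine ⟨hza, ?_⟩
      have hmeq : (z + b) % k = (x + a) % k := by
        rw [Nat.add_mod, Nat.add_mod x a, hx, hza, Nat.add_comm (b % k) (a % k)]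
      have hdvd : k ∣ (x + a) - (z + b) := (Nat.modEq_iff_dvd' (by omega)).mp hmeq
      have := dvd_eq_k hk hdvd (by omega) (by omega)
      omega
    · right
      refine ⟨hzb, ?_⟩
      have h2' : x < z + 2 * k := h2s hzb
      have hdvd : k ∣ x - z := (Nat.modEq_iff_dvd' (by omega)).mp
        (Nat.ModEq.symm (by rw [Nat.ModEq, hx, hzb]))
      have := dvd_eq_k hk hdvd (by omega) (by omega)
      omega
  · rintro (⟨hza, hxe⟩ | ⟨hzb, hxe⟩)
    · refine ⟨⟨by omega, fun hxa => absurd (hxa.symm.trans hx) hne⟩, by omega, fun _ => by omega⟩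
    · refine ⟨⟨by omega, fun hxa => absurd (hxa.symm.trans hx) hne⟩, by omega, fun _ => by omega⟩

lemma head_lb (ha : 1 ≤ a) (hab : a < b) (hbk : b ≤ k) :
    ∀ m (l : List ℕ) (y : ℕ), memBD' a b k m l → l.head? = some y →
      ((y % k = b % k → k * (m - 1) + b ≤ y) ∧ (2 ≤ m → y % k = a % k → k * m + a ≤ y)) := by
  have hk : 0 < k := by omega
  have hne := hne_ab ha hab hbk
  intro m
  induction m with
  | zero =>
    rintro l y ⟨-, hl, -⟩ hh
    rw [List.length_eq_zero_iff] at hl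
    subst hl; simp at hh
  | succ m ih =>
    rintro l y hmem hh
    rcases l with _ | ⟨x, t⟩
    · simp at hh
    · have hxy : x = y := by simpa using hh
      subst hxy
      rcases t with _ | ⟨z, t'⟩
      · -- singleton
        have hm0 : m = 0 := by have := hmem.2.1; simpa using this.symm
        subst hm0
        constructor
        · intro hyb
          have hlast := hmem.2.2.2.1
          simp only [List.getLast?_singleton, Option.some_inj] at hlast
          rcases hlast with rfl | rfl
          · exact absurd hyb hne
          · simp
        · intro h2; omega
      · rw [memBD'_cons] at hmem
        obtain ⟨htail, hx0, hxr, hR⟩ := hmem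
        have hm1 : 1 ≤ m := by have := htail.2.1; simp at this; omega
        obtain ⟨m', rfl⟩ : ∃ m', m = m' + 1 := ⟨m - 1, by omega⟩
        have hzres := (htail.2.2.1 z (by simp)).2
        have ihz := ih (z :: t') z htail rfl
        simp only [Nat.add_sub_cancel] at ihz ⊢
        have ee1 : k * (m' + 1) = k * m' + k := by ring
        have ee2 : k * (m' + 1 + 1) = k * m' + 2 * k := by ring
        have hzge_a : z % k = a % k → a ≤ z := by
          intro hza
          have := Nat.mod_le z k
          rw [hza, hamod hab hbk] at this; omega
        constructor
        · intro hyb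
          rcases hzres with hza | hzb
          · rcases Nat.lt_or_ge m' 1 with hm' | hm'
            · -- m' = 0, tail is [z] with z ≡ a
              obtain rfl : m' = 0 := by omega
              have hby : b < x := by omega
              have := res_step hk (by rw [hyb] : x % k = b % k) hby
              norm_num at ee1 ee2 ⊢
              omega
            · have hz := ihz.2 (by omega) hza
              have := hR.1.1
              omega
          · have hz := ihz.1 hzb
            have := hR.1.1
            omega
        · intro _ hya
          have hstrict : z + k < x := hR.1.2 hya
          rcases hzres with hza | hzb
          · rcases Nat.lt_or_ge m' 1 with hm' | hm'
            · obtain rfl : m' = 0 := by omega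
              have h1 : k + a < x := by have := hzge_a hza; omega
              have hmod : x % k = (k + a) % k := by
                rw [hya]; rw [show k + a = k * 1 + a by ring, mod_mul_add]
              have := res_step hk hmod h1
              norm_num at ee1 ee2 ⊢
              omega
            · have hz := ihz.2 (by omega) hza
              omega
          · have hz := ihz.1 hzb
            have h1 : k * (m' + 1) + a < x := by omega
            have hmod : x % k = (k * (m' + 1) + a) % k := by rw [hya, mod_mul_add]
            have := res_step hk hmod h1
            omega

lemma D_finite (m H : ℕ) : {l : List ℕ | memBD' a b k m l ∧ l.head? = some H}.Finite := by
  apply Set.Finite.subset (finite_lists m (H+1))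
  rintro l ⟨⟨hs, hl, -⟩, hh⟩
  refine ⟨hl, ?_⟩
  rcases l with _ | ⟨x, t⟩
  · simp at hh
  · have hxH : x = H := by simpa using hh
    subst hxH
    intro y hy
    rcases List.mem_cons.mp hy with rfl | hy
    · omega
    · have := (List.pairwise_cons.mp hs).1 y hy
      omega

lemma D_decomp_a (ha : 1 ≤ a) (hab : a < b) (hbk : b ≤ k) (m h : ℕ) (hm : 1 ≤ m) :
    {l : List ℕ | memBD' a b k (m+1) l ∧ l.head? = some (k*(h+1+m)+a)} =
      (fun t => (k*(h+1+m)+a) :: t) ''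
        ({t : List ℕ | memBD' a b k m t ∧ t.head? = some (k*(h+m-1)+a)} ∪
         {t : List ℕ | memBD' a b k m t ∧ t.head? = some (k*(h+m-1)+b)}) := by
  have hk : 0 < k := by omega
  have hx2 : k*(h+1+m)+a = (k*(h+m-1)+a) + 2*k := by
    have e : h+1+m = (h+m-1)+2 := by omega
    rw [e, Nat.mul_add]; ring
  have hx3 : k*(h+1+m)+a + b = (k*(h+m-1)+b) + 2*k + a := by
    have e : h+1+m = (h+m-1)+2 := by omega
    rw [e, Nat.mul_add]; ring
  have hxmod : (k*(h+1+m)+a) % k = a % k := mod_mul_add k _ a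
  ext l
  simp only [Set.mem_setOf_eq, Set.mem_image, Set.mem_union]
  constructor
  · rintro ⟨hmem, hh⟩
    rcases l with _ | ⟨x, _ | ⟨z, t'⟩⟩
    · simp at hh
    · exfalso; have := hmem.2.1; simp at this; omega
    · have hxH : x = k*(h+1+m)+a := by simpa using hh
      subst hxH
      rw [memBD'_cons] at hmem
      obtain ⟨htail, -, -, hR⟩ := hmem
      have hzres := (htail.2.2.1 z (by simp)).2
      rcases (R_char_a ha hab hbk hxmod hzres).mp hR with ⟨hza, hxe⟩ | ⟨hzb, hxe⟩
      · exact ⟨z :: t', Or.inl ⟨htail, by simp only [List.head?_cons, Option.some_inj]; omega⟩, rfl⟩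
      · exact ⟨z :: t', Or.inr ⟨htail, by simp only [List.head?_cons, Option.some_inj]; omega⟩, rfl⟩
  · rintro ⟨t, ht, rfl⟩
    refine ⟨?_, by simp⟩
    rcases t with _ | ⟨z, t'⟩
    · exfalso; rcases ht with ⟨hmem, hh⟩ | ⟨hmem, hh⟩ <;> simp at hh
    · rcases ht with ⟨hmem, hh⟩ | ⟨hmem, hh⟩
      · have hz : z = k*(h+m-1)+a := by simpa using hh
        subst hz
        rw [memBD'_cons]
        refine ⟨hmem, by omega, Or.inl hxmod, (R_char_a ha hab hbk hxmod (Or.inl (mod_mul_add k _ a))).mpr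
          (Or.inl ⟨mod_mul_add k _ a, by omega⟩)⟩
      · have hz : z = k*(h+m-1)+b := by simpa using hh
        subst hz
        rw [memBD'_cons]
        refine ⟨hmem, by omega, Or.inl hxmod, (R_char_a ha hab hbk hxmod (Or.inr (mod_mul_add k _ b))).mpr
          (Or.inr ⟨mod_mul_add k _ b, by omega⟩)⟩

lemma D_decomp_b (ha : 1 ≤ a) (hab : a < b) (hbk : b ≤ k) (m h : ℕ) (hm : 1 ≤ m) :
    {l : List ℕ | memBD' a b k (m+1) l ∧ l.head? = some (k*(h+m)+b)} =
      (fun t => (k*(h+m)+b) :: t) ''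
        ({t : List ℕ | memBD' a b k m t ∧ t.head? = some (k*(h+m-1)+a)} ∪
         {t : List ℕ | memBD' a b k m t ∧ t.head? = some (k*(h+m-1)+b)}) := by
  have hk : 0 < k := by omega
  have e2 : k*(h+m) = k*(h+m-1) + k := by
    conv_lhs => rw [show h+m = (h+m-1)+1 by omega]
    rw [Nat.mul_add]; ring
  have hx2 : k*(h+m)+b + a = (k*(h+m-1)+a) + k + b := by omega
  have hx3 : k*(h+m)+b = (k*(h+m-1)+b) + k := by omega
  have hxmod : (k*(h+m)+b) % k = b % k := mod_mul_add k _ b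
  ext l
  simp only [Set.mem_setOf_eq, Set.mem_image, Set.mem_union]
  constructor
  · rintro ⟨hmem, hh⟩
    rcases l with _ | ⟨x, _ | ⟨z, t'⟩⟩
    · simp at hh
    · exfalso; have := hmem.2.1; simp at this; omega
    · have hxH : x = k*(h+m)+b := by simpa using hh
      subst hxH
      rw [memBD'_cons] at hmem
      obtain ⟨htail, -, -, hR⟩ := hmem
      have hzres := (htail.2.2.1 z (by simp)).2
      rcases (R_char_b ha hab hbk hxmod hzres).mp hR with ⟨hza, hxe⟩ | ⟨hzb, hxe⟩
      · exact ⟨z :: t', Or.inl ⟨htail, by simp only [List.head?_cons, Option.some_inj]; omega⟩, rfl⟩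
      · exact ⟨z :: t', Or.inr ⟨htail, by simp only [List.head?_cons, Option.some_inj]; omega⟩, rfl⟩
  · rintro ⟨t, ht, rfl⟩
    refine ⟨?_, by simp⟩
    rcases t with _ | ⟨z, t'⟩
    · exfalso; rcases ht with ⟨hmem, hh⟩ | ⟨hmem, hh⟩ <;> simp at hh
    · rcases ht with ⟨hmem, hh⟩ | ⟨hmem, hh⟩
      · have hz : z = k*(h+m-1)+a := by simpa using hh
        subst hz
        rw [memBD'_cons]
        refine ⟨hmem, by omega, Or.inr hxmod, (R_char_b ha hab hbk hxmod (Or.inl (mod_mul_add k _ a))).mpr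
          (Or.inl ⟨mod_mul_add k _ a, by omega⟩)⟩
      · have hz : z = k*(h+m-1)+b := by simpa using hh
        subst hz
        rw [memBD'_cons]
        refine ⟨hmem, by omega, Or.inr hxmod, (R_char_b ha hab hbk hxmod (Or.inr (mod_mul_add k _ b))).mpr
          (Or.inr ⟨mod_mul_add k _ b, by omega⟩)⟩

lemma D1_eval (ha : 1 ≤ a) (hab : a < b) (hbk : b ≤ k) (y : ℕ) :
    {l : List ℕ | memBD' a b k 1 l ∧ l.head? = some y} =
      if y = a ∨ y = b then {[y]} else ∅ := by
  ext l
  simp only [Set.mem_setOf_eq]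
  constructor
  · rintro ⟨hm, hh⟩
    rcases l with _ | ⟨z, _ | _⟩
    · simp at hh
    · have hz : z = y := by simpa using hh
      subst hz
      rw [if_pos ((memBD'_single ha hab hbk z).mp hm)]
      simp
    · exfalso; have := hm.2.1; simp at this
  · intro hl
    by_cases hy : y = a ∨ y = b
    · rw [if_pos hy] at hl
      simp only [Set.mem_singleton_iff] at hl
      subst hl
      exact ⟨(memBD'_single ha hab hbk y).mpr hy, rfl⟩
    · rw [if_neg hy] at hl; exact absurd hl (Set.notMem_empty l)

lemma sum_step_gen (H : ℕ) (S : Set (List ℕ)) (hS : S.Finite)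
    (u v q : ℂ) (c : ℂ)
    (hw : ∀ t ∈ S, u ^ lcount k a (H :: t) * v ^ lcount k b (H :: t) * q ^ (H :: t).sum
        = c * (u ^ lcount k a t * v ^ lcount k b t * q ^ t.sum)) :
    ∑ᶠ l ∈ (fun t => H :: t) '' S, u ^ lcount k a l * v ^ lcount k b l * q ^ l.sum
      = c * ∑ᶠ t ∈ S, u ^ lcount k a t * v ^ lcount k b t * q ^ t.sum := by
  rw [finsum_mem_image (fun x _ y _ hxy => by simpa using hxy)]
  rw [finsum_mem_congr rfl hw]
  exact finsum_mem_const_mul c _ S hS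

lemma disj_ab (m za zb : ℕ) (hzab : za ≠ zb) :
    Disjoint {t : List ℕ | memBD' a b k m t ∧ t.head? = some za}
      {t : List ℕ | memBD' a b k m t ∧ t.head? = some zb} := by
  rw [Set.disjoint_left]
  rintro t ⟨-, h1⟩ ⟨-, h2⟩
  rw [h1] at h2
  exact hzab (by simpa using h2)

lemma sum_step_a (ha : 1 ≤ a) (hab : a < b) (hbk : b ≤ k) (m h : ℕ) (hm : 1 ≤ m)
    (u v q : ℂ) :
    ∑ᶠ l ∈ {l : List ℕ | memBD' a b k (m+1) l ∧ l.head? = some (k*(h+1+m)+a)},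
        u ^ lcount k a l * v ^ lcount k b l * q ^ l.sum
      = u * q^(k*(h+1+m)+a) *
        ((∑ᶠ t ∈ {t : List ℕ | memBD' a b k m t ∧ t.head? = some (k*(h+m-1)+a)},
            u ^ lcount k a t * v ^ lcount k b t * q ^ t.sum)
        + (∑ᶠ t ∈ {t : List ℕ | memBD' a b k m t ∧ t.head? = some (k*(h+m-1)+b)},
            u ^ lcount k a t * v ^ lcount k b t * q ^ t.sum)) := by
  have hne := hne_ab ha hab hbk
  rw [D_decomp_a ha hab hbk m h hm]
  rw [sum_step_gen (k*(h+1+m)+a) _ ((D_finite m _).union (D_finite m _)) u v q (u * q^(k*(h+1+m)+a)) ?_]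
  · rw [finsum_mem_union (disj_ab m _ _ (by omega)) (D_finite m _) (D_finite m _)]
  · intro t _
    rw [lcount_cons_self t (mod_mul_add k _ a), lcount_cons_ne t (by rw [mod_mul_add k _ a]; exact hne),
      List.sum_cons, pow_add, pow_succ]
    ring

lemma sum_step_b (ha : 1 ≤ a) (hab : a < b) (hbk : b ≤ k) (m h : ℕ) (hm : 1 ≤ m)
    (u v q : ℂ) :
    ∑ᶠ l ∈ {l : List ℕ | memBD' a b k (m+1) l ∧ l.head? = some (k*(h+m)+b)},
        u ^ lcount k a l * v ^ lcount k b l * q ^ l.sum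
      = v * q^(k*(h+m)+b) *
        ((∑ᶠ t ∈ {t : List ℕ | memBD' a b k m t ∧ t.head? = some (k*(h+m-1)+a)},
            u ^ lcount k a t * v ^ lcount k b t * q ^ t.sum)
        + (∑ᶠ t ∈ {t : List ℕ | memBD' a b k m t ∧ t.head? = some (k*(h+m-1)+b)},
            u ^ lcount k a t * v ^ lcount k b t * q ^ t.sum)) := by
  have hne := hne_ab ha hab hbk
  rw [D_decomp_b ha hab hbk m h hm]
  rw [sum_step_gen (k*(h+m)+b) _ ((D_finite m _).union (D_finite m _)) u v q (v * q^(k*(h+m)+b)) ?_]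
  · rw [finsum_mem_union (disj_ab m _ _ (by omega)) (D_finite m _) (D_finite m _)]
  · intro t _
    rw [lcount_cons_self t (mod_mul_add k _ b), lcount_cons_ne t (by rw [mod_mul_add k _ b]; exact fun hc => hne hc.symm),
      List.sum_cons, pow_add, pow_succ]
    ring

lemma choose2_succ (n : ℕ) : Nat.choose (n+1) 2 = n + Nat.choose n 2 := by
  have h := Nat.choose_succ_succ n 1
  simpa [Nat.choose_one_right] using h

lemma D_empty_low_a (ha : 1 ≤ a) (hab : a < b) (hbk : b ≤ k) (m : ℕ) (hm : 2 ≤ m)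
    (c : ℕ) (hc : c < m) :
    {t : List ℕ | memBD' a b k m t ∧ t.head? = some (k*c+a)} = ∅ := by
  ext t
  simp only [Set.mem_setOf_eq, Set.mem_empty_iff_false, iff_false, not_and]
  intro hmem hh
  have := (head_lb ha hab hbk m t _ hmem hh).2 hm (mod_mul_add k c a)
  have h2 : k*(c+1) ≤ k*m := Nat.mul_le_mul_left k (by omega)
  have h3 : k*(c+1) = k*c+k := by ring
  omega

lemma core (ha : 1 ≤ a) (hab : a < b) (hbk : b ≤ k) (q u v : ℂ) (hq : ‖q‖ < 1) :
    ∀ m, 2 ≤ m → ∀ h : ℕ,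
      ((∑ᶠ l ∈ {l : List ℕ |
            memBD' a b k m l ∧ l.head? = some (k * (h + 1) + k * (m - 1) + a)},
          u ^ lcount k a l * v ^ lcount k b l * q ^ l.sum)
        = (u * q ^ a + v * q ^ b) * u ^ (h + 1) * v ^ (m - h - 2) *
            q ^ (k * Nat.choose m 2 + k * Nat.choose (h + 1) 2 + (m - 1) * b +
              (k - b + a) * (h + 1)) *
            gbinom (q ^ k) (m - 2) h)
      ∧ ((∑ᶠ l ∈ {l : List ℕ |
            memBD' a b k m l ∧ l.head? = some (k * h + k * (m - 1) + b)},
          u ^ lcount k a l * v ^ lcount k b l * q ^ l.sum)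
        = (u * q ^ a + v * q ^ b) * u ^ h * v ^ (m - h - 1) *
            q ^ (k * Nat.choose m 2 + k * Nat.choose (h + 1) 2 + (m - 1) * b +
              (k - b + a) * h) *
            gbinom (q ^ k) (m - 2) h) := by
  have hk : 0 < k := by omega
  have hne := hne_ab ha hab hbk
  have hqk : ‖q ^ k‖ < 1 := by
    rw [norm_pow]
    exact pow_lt_one₀ (norm_nonneg q) hq (by omega)
  have Wa : ∀ c : ℕ, u ^ lcount k a [k*c+a] * v ^ lcount k b [k*c+a] * q ^ ([k*c+a].sum)
      = u * q ^ (k*c+a) := by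
    intro c
    rw [lcount_cons_self _ (mod_mul_add k c a), lcount_cons_ne _ (by rw [mod_mul_add]; exact hne)]
    simp [lcount]
  have Wb : ∀ c : ℕ, u ^ lcount k a [k*c+b] * v ^ lcount k b [k*c+b] * q ^ ([k*c+b].sum)
      = v * q ^ (k*c+b) := by
    intro c
    rw [lcount_cons_self _ (mod_mul_add k c b),
      lcount_cons_ne _ (by rw [mod_mul_add]; exact fun hc => hne hc.symm)]
    simp [lcount]
  intro m hm
  induction m, hm using Nat.le_induction with
  | base =>
    intro h
    constructor
    · -- a-side, m = 2
      rw [show k*(h+1)+k*(2-1)+a = k*(h+1+1)+a from by simp only [show (2:ℕ)-1 = 1 from rfl]; ring]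
      rw [sum_step_a ha hab hbk 1 h (by omega) u v q]
      rw [show k*(h+1-1)+a = k*h+a from by rw [show h+1-1 = h from by omega]]
      rw [show k*(h+1-1)+b = k*h+b from by rw [show h+1-1 = h from by omega]]
      rw [D1_eval ha hab hbk (k*h+a), D1_eval ha hab hbk (k*h+b)]
      rcases h with _ | j
      · rw [if_pos (Or.inl (by simp : k*0+a = a)), if_pos (Or.inr (by simp : k*0+b = b))]
        rw [finsum_mem_singleton, finsum_mem_singleton, Wa 0, Wb 0]
        rw [show (2:ℕ)-2 = 0 from rfl, gbinom_zero_right hqk]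
        rw [show k*Nat.choose 2 2 + k*Nat.choose (0+1) 2 + (2-1)*b + (k-b+a)*(0+1)
            = k*(0+1+1)+a from by
          rw [show Nat.choose 2 2 = 1 from rfl, show Nat.choose (0+1) 2 = 0 from rfl]
          have q2 : (k-b+a)*(0+1) = k-b+a := by ring
          have q3 : k*(0+1+1) = 2*k := by ring
          omega]
        rw [show k*0+a = a from by simp, show k*0+b = b from by simp]
        ring
      · have hj : k*1 ≤ k*(j+1) := Nat.mul_le_mul_left k (by omega)
        rw [if_neg (by omega), if_neg (by omega)]
        rw [finsum_mem_empty]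
        rw [show (2:ℕ)-2 = 0 from rfl, gbinom_eq_zero (q^k) (show 0 < j+1 from by omega)]
        ring
    · -- b-side, m = 2
      rw [show k*h+k*(2-1)+b = k*(h+1)+b from by simp only [show (2:ℕ)-1 = 1 from rfl]; ring]
      rw [sum_step_b ha hab hbk 1 h (by omega) u v q]
      rw [show k*(h+1-1)+a = k*h+a from by rw [show h+1-1 = h from by omega]]
      rw [show k*(h+1-1)+b = k*h+b from by rw [show h+1-1 = h from by omega]]
      rw [D1_eval ha hab hbk (k*h+a), D1_eval ha hab hbk (k*h+b)]
      rcases h with _ | j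
      · rw [if_pos (Or.inl (by simp : k*0+a = a)), if_pos (Or.inr (by simp : k*0+b = b))]
        rw [finsum_mem_singleton, finsum_mem_singleton, Wa 0, Wb 0]
        rw [show (2:ℕ)-2 = 0 from rfl, gbinom_zero_right hqk]
        rw [show k*Nat.choose 2 2 + k*Nat.choose (0+1) 2 + (2-1)*b + (k-b+a)*0
            = k*(0+1)+b from by
          rw [show Nat.choose 2 2 = 1 from rfl, show Nat.choose (0+1) 2 = 0 from rfl]
          have q2 : (k-b+a)*0 = 0 := by ring
          have q3 : k*(0+1) = k := by ring
          omega]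
        rw [show k*0+a = a from by simp, show k*0+b = b from by simp]
        ring
      · have hj : k*1 ≤ k*(j+1) := Nat.mul_le_mul_left k (by omega)
        rw [if_neg (by omega), if_neg (by omega)]
        rw [finsum_mem_empty]
        rw [show (2:ℕ)-2 = 0 from rfl, gbinom_eq_zero (q^k) (show 0 < j+1 from by omega)]
        ring
  | succ m hm IH =>
    intro h
    obtain ⟨m', rfl⟩ : ∃ m', m = m' + 2 := ⟨m - 2, by omega⟩
    constructor
    · -- a-side, m'+3
      rw [show k*(h+1)+k*(m'+2+1-1)+a = k*(h+1+(m'+2))+a from by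
        simp only [Nat.add_sub_cancel]; ring]
      rw [sum_step_a ha hab hbk (m'+2) h (by omega) u v q]
      rw [show k*(h+(m'+2)-1)+a = k*(h+(m'+1))+a from by
        rw [show h+(m'+2)-1 = h+(m'+1) from by omega]]
      rw [show k*(h+(m'+2)-1)+b = k*(h+(m'+1))+b from by
        rw [show h+(m'+2)-1 = h+(m'+1) from by omega]]
      rcases h with _ | j
      · -- h = 0
        rw [show k*(0+(m'+1))+a = k*(m'+1)+a from by ring]
        rw [D_empty_low_a ha hab hbk (m'+2) (by omega) (m'+1) (by omega), finsum_mem_empty]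
        rw [show k*(0+(m'+1))+b = k*0+k*(m'+2-1)+b from by
          rw [show m'+2-1 = m'+1 from rfl]; ring]
        rw [(IH 0).2]
        rw [show m'+2-2 = m' from rfl, show m'+2+1-2 = m'+1 from rfl]
        rw [gbinom_zero_right hqk, gbinom_zero_right hqk]
        rw [show m'+2-0-1 = m'+1 from by omega, show m'+2+1-0-2 = m'+1 from by omega]
        have c1 : k*Nat.choose (m'+2+1) 2 = k*(m'+2) + k*Nat.choose (m'+2) 2 := by
          rw [choose2_succ]; ring
        have p2 : k*(m'+2) = k*m' + 2*k := by ring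
        have p1 : k*(0+1+(m'+2)) = k*m' + 3*k := by ring
        rw [show k*Nat.choose (m'+2+1) 2 + k*Nat.choose (0+1) 2 + (m'+2+1-1)*b + (k-b+a)*(0+1)
            = (k*(0+1+(m'+2))+a) + (k*Nat.choose (m'+2) 2 + k*Nat.choose (0+1) 2 + (m'+2-1)*b + (k-b+a)*0)
            from by
          rw [show m'+2+1-1 = m'+2 from rfl, show m'+2-1 = m'+1 from rfl]
          have q1 : (m'+2)*b = (m'+1)*b + b := by ring
          have q2 : (k-b+a)*(0+1) = k-b+a := by ring
          have q3 : (k-b+a)*0 = 0 := by ring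
          omega]
        rw [pow_add]
        ring
      · -- h = j+1
        rw [show k*((j+1)+(m'+1))+a = k*(j+1)+k*(m'+2-1)+a from by
          rw [show m'+2-1 = m'+1 from rfl]; ring]
        rw [(IH j).1]
        rw [show k*((j+1)+(m'+1))+b = k*(j+1)+k*(m'+2-1)+b from by
          rw [show m'+2-1 = m'+1 from rfl]; ring]
        rw [(IH (j+1)).2]
        rw [show m'+2-2 = m' from rfl, show m'+2+1-2 = m'+1 from rfl]
        rw [gbinom_pascal hqk m' j]
        rw [show m'+2-j-2 = m'-j from by omega, show m'+2-(j+1)-1 = m'-j from by omega,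
          show m'+2+1-(j+1)-2 = m'-j from by omega]
        have c1 : k*Nat.choose (m'+2+1) 2 = k*(m'+2) + k*Nat.choose (m'+2) 2 := by
          rw [choose2_succ]; ring
        have c2 : k*Nat.choose (j+1+1) 2 = k*(j+1) + k*Nat.choose (j+1) 2 := by
          rw [choose2_succ]; ring
        have p1 : k*(j+1+1+(m'+2)) = k*m' + k*j + 4*k := by ring
        have p2 : k*(m'+2) = k*m' + 2*k := by ring
        have p3 : k*(j+1) = k*j + k := by ring
        rw [show k*Nat.choose (m'+2) 2 + k*Nat.choose (j+1+1) 2 + (m'+2-1)*b + (k-b+a)*(j+1)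
            = (k*Nat.choose (m'+2) 2 + k*Nat.choose (j+1) 2 + (m'+2-1)*b + (k-b+a)*(j+1))
              + k*(j+1) from by omega]
        rw [show k*Nat.choose (m'+2+1) 2 + k*Nat.choose (j+1+1) 2 + (m'+2+1-1)*b + (k-b+a)*(j+1+1)
            = (k*(j+1+1+(m'+2))+a) + (k*Nat.choose (m'+2) 2 + k*Nat.choose (j+1) 2 + (m'+2-1)*b + (k-b+a)*(j+1))
            from by
          rw [show m'+2+1-1 = m'+2 from rfl, show m'+2-1 = m'+1 from rfl]
          have q1 : (m'+2)*b = (m'+1)*b + b := by ring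
          have q2 : (k-b+a)*(j+1+1) = (k-b+a)*(j+1) + (k-b+a) := by ring
          omega]
        rw [pow_add, pow_add, ← pow_mul]
        ring
    · -- b-side, m'+3
      rw [show k*h+k*(m'+2+1-1)+b = k*(h+(m'+2))+b from by
        simp only [Nat.add_sub_cancel]; ring]
      rw [sum_step_b ha hab hbk (m'+2) h (by omega) u v q]
      rw [show k*(h+(m'+2)-1)+a = k*(h+(m'+1))+a from by
        rw [show h+(m'+2)-1 = h+(m'+1) from by omega]]
      rw [show k*(h+(m'+2)-1)+b = k*(h+(m'+1))+b from by
        rw [show h+(m'+2)-1 = h+(m'+1) from by omega]]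
      rcases h with _ | j
      · -- h = 0
        rw [show k*(0+(m'+1))+a = k*(m'+1)+a from by ring]
        rw [D_empty_low_a ha hab hbk (m'+2) (by omega) (m'+1) (by omega), finsum_mem_empty]
        rw [show k*(0+(m'+1))+b = k*0+k*(m'+2-1)+b from by
          rw [show m'+2-1 = m'+1 from rfl]; ring]
        rw [(IH 0).2]
        rw [show m'+2-2 = m' from rfl, show m'+2+1-2 = m'+1 from rfl]
        rw [gbinom_zero_right hqk, gbinom_zero_right hqk]
        rw [show m'+2-0-1 = m'+1 from by omega, show m'+2+1-0-1 = m'+1+1 from by omega]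
        have c1 : k*Nat.choose (m'+2+1) 2 = k*(m'+2) + k*Nat.choose (m'+2) 2 := by
          rw [choose2_succ]; ring
        have p2 : k*(m'+2) = k*m' + 2*k := by ring
        have p1 : k*(0+(m'+2)) = k*m' + 2*k := by ring
        rw [show k*Nat.choose (m'+2+1) 2 + k*Nat.choose (0+1) 2 + (m'+2+1-1)*b + (k-b+a)*0
            = (k*(0+(m'+2))+b) + (k*Nat.choose (m'+2) 2 + k*Nat.choose (0+1) 2 + (m'+2-1)*b + (k-b+a)*0)
            from by
          rw [show m'+2+1-1 = m'+2 from rfl, show m'+2-1 = m'+1 from rfl]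
          have q1 : (m'+2)*b = (m'+1)*b + b := by ring
          have q2 : (k-b+a)*(0+1) = k-b+a := by ring
          have q3 : (k-b+a)*0 = 0 := by ring
          omega]
        rw [pow_add]
        ring
      · -- h = j+1
        rw [show k*((j+1)+(m'+1))+a = k*(j+1)+k*(m'+2-1)+a from by
          rw [show m'+2-1 = m'+1 from rfl]; ring]
        rw [(IH j).1]
        rw [show k*((j+1)+(m'+1))+b = k*(j+1)+k*(m'+2-1)+b from by
          rw [show m'+2-1 = m'+1 from rfl]; ring]
        rw [(IH (j+1)).2]
        rw [show m'+2-2 = m' from rfl, show m'+2+1-2 = m'+1 from rfl]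
        rw [gbinom_pascal hqk m' j]
        rcases le_or_gt j m' with hjm | hjm
        · rw [show m'+2-j-2 = m'-j from by omega, show m'+2-(j+1)-1 = m'-j from by omega,
            show m'+2+1-(j+1)-1 = (m'-j)+1 from by omega]
          have c1 : k*Nat.choose (m'+2+1) 2 = k*(m'+2) + k*Nat.choose (m'+2) 2 := by
            rw [choose2_succ]; ring
          have c2 : k*Nat.choose (j+1+1) 2 = k*(j+1) + k*Nat.choose (j+1) 2 := by
            rw [choose2_succ]; ring
          have p1 : k*((j+1)+(m'+2)) = k*m' + k*j + 3*k := by ring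
          have p2 : k*(m'+2) = k*m' + 2*k := by ring
          have p3 : k*(j+1) = k*j + k := by ring
          rw [show k*Nat.choose (m'+2) 2 + k*Nat.choose (j+1+1) 2 + (m'+2-1)*b + (k-b+a)*(j+1)
              = (k*Nat.choose (m'+2) 2 + k*Nat.choose (j+1) 2 + (m'+2-1)*b + (k-b+a)*(j+1))
                + k*(j+1) from by omega]
          rw [show k*Nat.choose (m'+2+1) 2 + k*Nat.choose (j+1+1) 2 + (m'+2+1-1)*b + (k-b+a)*(j+1)
              = (k*((j+1)+(m'+2))+b) + (k*Nat.choose (m'+2) 2 + k*Nat.choose (j+1) 2 + (m'+2-1)*b + (k-b+a)*(j+1))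
              from by
            rw [show m'+2+1-1 = m'+2 from rfl, show m'+2-1 = m'+1 from rfl]
            have q1 : (m'+2)*b = (m'+1)*b + b := by ring
            have q2 : (k-b+a)*(j+1+1) = (k-b+a)*(j+1) + (k-b+a) := by ring
            omega]
          rw [pow_add, pow_add, ← pow_mul, pow_succ]
          ring
        · rw [show gbinom (q^k) m' j = 0 from gbinom_eq_zero _ (by omega),
            show gbinom (q^k) m' (j+1) = 0 from gbinom_eq_zero _ (by omega)]
          ring

end main

/-- Generating functions for the partitions in `BD'_{a,b,k}(m,h,a)` (largest part
`k(h+1)+k(m-1)+a`) and `BD'_{a,b,k}(m,h,b)` (largest part `kh+k(m-1)+b`). -/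
theorem gen_BD'_mha (a b k m h : ℕ) (ha : 1 ≤ a) (hab : a < b) (hbk : b ≤ k)
    (hm : 2 ≤ m) (hh : h ≤ m - 2) (q u v : ℂ) (hq : ‖q‖ < 1) :
    (∑ᶠ l ∈ {l : List ℕ |
          memBD' a b k m l ∧ l.head? = some (k * (h + 1) + k * (m - 1) + a)},
        u ^ lcount k a l * v ^ lcount k b l * q ^ l.sum
      = (u * q ^ a + v * q ^ b) * u ^ (h + 1) * v ^ (m - h - 2) *
          q ^ (k * Nat.choose m 2 + k * Nat.choose (h + 1) 2 + (m - 1) * b +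
            (k - b + a) * (h + 1)) *
          gbinom (q ^ k) (m - 2) h)
    ∧ (∑ᶠ l ∈ {l : List ℕ | memBD' a b k m l ∧ l.head? = some (k * h + k * (m - 1) + b)},
        u ^ lcount k a l * v ^ lcount k b l * q ^ l.sum
      = (u * q ^ a + v * q ^ b) * u ^ h * v ^ (m - h - 1) *
          q ^ (k * Nat.choose m 2 + k * Nat.choose (h + 1) 2 + (m - 1) * b +
            (k - b + a) * h) *
          gbinom (q ^ k) (m - 2) h) := by
  
  have hc := core ha hab hbk q u v hq m hm h
  exact ⟨hc.1, hc.2⟩
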